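/- arXiv:2201.03563 — 9 statements merged into one kernel-verified Lean document; each statement's English description precedes it below -/
import Mathlib

section
/- Let G be a connected graph on n vertices without isolated vertices and with domination number γ(G) = 1. Then for every permutation π of V(G) and every p ∈ ((n+1)/(2n), 1], the p-domination number of the prism satisfies γ_p(πG) = 2. -/
open SimpleGraph

/-- Closed neighborhood of a set of vertices. -/
def closedNbhd {V : Type*} (G : SimpleGraph V) (S : Set V) : Set V :=
  {v | v ∈ S ∨ ∃ u ∈ S, G.Adj u v}

/-- `S` is a `p`-dominating set of `G`. -/
def IsPDomSet {V : Type*} [Fintype V] (G : SimpleGraph V) (p : ℝ) (S : Set V) : Prop :=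
  p ≤ (closedNbhd G S).ncard / (Fintype.card V : ℝ)

/-- The `p`-domination number of `G`. -/
noncomputable def pDomNum {V : Type*} [Fintype V] (G : SimpleGraph V) (p : ℝ) : ℕ :=
  sInf {k | ∃ S : Set V, IsPDomSet G p S ∧ S.ncard = k}

/-- `S` is a dominating set of `G`. -/
def IsDomSet {V : Type*} (G : SimpleGraph V) (S : Set V) : Prop :=
  ∀ v, v ∈ closedNbhd G S

/-- The domination number of `G`. -/
noncomputable def domNum {V : Type*} (G : SimpleGraph V) : ℕ :=
  sInf {k | ∃ S : Set V, IsDomSet G S ∧ S.ncard = k}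

/-- The prism of `G` with respect to a permutation `π`. -/
def prism {V : Type*} (G : SimpleGraph V) (π : Equiv.Perm V) : SimpleGraph (V ⊕ V) where
  Adj x y := match x, y with
    | .inl a, .inl b => G.Adj a b
    | .inr a, .inr b => G.Adj a b
    | .inl a, .inr b => π a = b
    | .inr a, .inl b => π b = a
  symm := ⟨by rintro (a|a) (b|b) h <;> simp_all [SimpleGraph.adj_comm]⟩
  loopless := ⟨by rintro (a|a) h <;> simp_all⟩

theorem stmt1 {V : Type*} [Fintype V] (G : SimpleGraph V) (n : ℕ)
    (hn : Fintype.card V = n)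
    (hconn : G.Connected)
    (hiso : ∀ v : V, ∃ u : V, G.Adj u v)
    (hγ : domNum G = 1)
    (π : Equiv.Perm V) (p : ℝ)
    (hp0 : ((n : ℝ) + 1) / (2 * n) < p) (hp1 : p ≤ 1) :
    pDomNum (prism G π) p = 2 := by
  have hne : Nonempty V := hconn.nonempty
  have hn1 : 1 ≤ n := hn ▸ Fintype.card_pos
  have hnR : (0:ℝ) < n := by exact_mod_cast hn1
  have h2n : (0:ℝ) < 2 * n := by linarith
  have hp0' : (0:ℝ) < p := lt_of_le_of_lt (by positivity) hp0
  have hcardsum : Fintype.card (V ⊕ V) = 2 * n := by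
    simp [Fintype.card_sum, hn]; ring
  -- extract a universal vertex
  have hmem1 : 1 ∈ {k | ∃ S : Set V, IsDomSet G S ∧ S.ncard = k} := by
    rw [← hγ]
    apply Nat.sInf_mem
    by_contra h
    rw [Set.not_nonempty_iff_eq_empty] at h
    rw [domNum, h] at hγ
    simp at hγ
  obtain ⟨S, hS, hcard⟩ := hmem1
  obtain ⟨v, rfl⟩ := Set.ncard_eq_one.mp hcard
  have huniv : ∀ u : V, u = v ∨ G.Adj v u := by
    intro u
    have := hS u
    simpa [closedNbhd] using this
  -- upper bound: {inl v, inr v} works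
  have hcover : closedNbhd (prism G π) {Sum.inl v, Sum.inr v} = Set.univ := by
    ext x
    simp only [Set.mem_univ, iff_true, closedNbhd, Set.mem_setOf_eq]
    rcases x with a | a
    · rcases huniv a with rfl | hadj
      · exact Or.inl (Or.inl rfl)
      · exact Or.inr ⟨Sum.inl v, Or.inl rfl, hadj⟩
    · rcases huniv a with rfl | hadj
      · exact Or.inl (Or.inr rfl)
      · exact Or.inr ⟨Sum.inr v, Or.inr rfl, hadj⟩
  have hmem2 : 2 ∈ {k | ∃ S : Set (V ⊕ V), IsPDomSet (prism G π) p S ∧ S.ncard = k} := by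
    refine ⟨{Sum.inl v, Sum.inr v}, ?_, ?_⟩
    · rw [IsPDomSet, hcover, Set.ncard_univ, Nat.card_eq_fintype_card, hcardsum]
      push_cast
      rw [div_self (by positivity)]
      exact hp1
    · rw [Set.ncard_pair (by simp)]
  -- lower bound
  have hlow : ∀ k ∈ {k | ∃ S : Set (V ⊕ V), IsPDomSet (prism G π) p S ∧ S.ncard = k}, 2 ≤ k := by
    rintro k ⟨T, hT, rfl⟩
    by_contra hk
    push_neg at hk
    interval_cases h : T.ncard
    · -- T empty
      have hTe : T = ∅ := (Set.ncard_eq_zero T.toFinite).mp h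
      rw [IsPDomSet, hTe] at hT
      have : closedNbhd (prism G π) (∅ : Set (V ⊕ V)) = ∅ := by
        ext x; simp [closedNbhd]
      rw [this] at hT
      simp at hT
      linarith
    · -- T singleton
      obtain ⟨x, rfl⟩ := Set.ncard_eq_one.mp h
      have hbound : (closedNbhd (prism G π) {x}).ncard ≤ n + 1 := by
        have hrange : ∀ (f : V → V ⊕ V), Function.Injective f →
            (Set.range f).ncard = n := by
          intro f hf
          rw [← Set.image_univ, Set.ncard_image_of_injective _ hf, Set.ncard_univ,
            Nat.card_eq_fintype_card, hn]
        rcases x with a | a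
        · have hsub : closedNbhd (prism G π) {Sum.inl a} ⊆
              Set.range Sum.inl ∪ {Sum.inr (π a)} := by
            rintro (b | b) hy
            · exact Or.inl ⟨b, rfl⟩
            · rcases hy with hy | ⟨u, hu, hadj⟩
              · simp at hy
              · simp only [Set.mem_singleton_iff] at hu
                subst hu
                simp only [prism] at hadj
                simp [hadj]
          calc (closedNbhd (prism G π) {Sum.inl a}).ncard
              ≤ (Set.range Sum.inl ∪ {Sum.inr (π a)} : Set (V ⊕ V)).ncard :=
                Set.ncard_le_ncard hsub (Set.toFinite _)
            _ ≤ (Set.range Sum.inl : Set (V ⊕ V)).ncard + ({Sum.inr (π a)} : Set (V ⊕ V)).ncard :=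
                Set.ncard_union_le _ _
            _ ≤ n + 1 := by rw [hrange _ Sum.inl_injective, Set.ncard_singleton]
        · have hsub : closedNbhd (prism G π) {Sum.inr a} ⊆
              Set.range Sum.inr ∪ {Sum.inl (π.symm a)} := by
            rintro (b | b) hy
            · rcases hy with hy | ⟨u, hu, hadj⟩
              · simp at hy
              · simp only [Set.mem_singleton_iff] at hu
                subst hu
                simp only [prism] at hadj
                have : b = π.symm a := by
                  rw [← hadj]; simp
                simp [this]
            · exact Or.inl ⟨b, rfl⟩
          calc (closedNbhd (prism G π) {Sum.inr a}).ncard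
              ≤ (Set.range Sum.inr ∪ {Sum.inl (π.symm a)} : Set (V ⊕ V)).ncard :=
                Set.ncard_le_ncard hsub (Set.toFinite _)
            _ ≤ (Set.range Sum.inr : Set (V ⊕ V)).ncard + ({Sum.inl (π.symm a)} : Set (V ⊕ V)).ncard :=
                Set.ncard_union_le _ _
            _ ≤ n + 1 := by rw [hrange _ Sum.inr_injective, Set.ncard_singleton]
      rw [IsPDomSet, hcardsum] at hT
      push_cast at hT
      have hc : ((closedNbhd (prism G π) {x}).ncard : ℝ) ≤ (n:ℝ) + 1 := by
        exact_mod_cast hbound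
      have hfin : p ≤ ((n:ℝ) + 1) / (2 * n) := hT.trans (by gcongr)
      linarith
  exact le_antisymm (Nat.sInf_le hmem2) (le_csInf ⟨2, hmem2⟩ hlow)
end

section
/- Let G be a connected graph on n vertices without isolated vertices and with domination number γ(G) = 1. Then for every p ∈ (0, (n+1)/(2n)], G is a universal γ_p-fixer; that is, γ_p(πG) = γ_p(G) for every permutation π of V(G). -/
open SimpleGraph

lemma pDomNum_eq_one_of {V : Type*} [Fintype V] [Nonempty V] (H : SimpleGraph V)
    (p : ℝ) (hp : 0 < p) (S : Set V) (hS : IsPDomSet H p S) (h1 : S.ncard = 1) :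
    pDomNum H p = 1 := by
  have hmem : (1 : ℕ) ∈ {k | ∃ S : Set V, IsPDomSet H p S ∧ S.ncard = k} := ⟨S, hS, h1⟩
  refine le_antisymm (Nat.sInf_le hmem) ?_
  rw [Nat.one_le_iff_ne_zero]
  intro h0
  have := Nat.sInf_mem ⟨1, hmem⟩
  unfold pDomNum at h0
  rw [h0] at this
  obtain ⟨T, hT, hT0⟩ := this
  have : T = ∅ := (Set.ncard_eq_zero (Set.toFinite T)).mp hT0
  subst this
  have he : closedNbhd H (∅ : Set V) = ∅ := by
    ext x; simp [closedNbhd]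
  rw [IsPDomSet, he] at hT
  simp at hT
  linarith

theorem stmt2 {V : Type*} [Fintype V] (G : SimpleGraph V) (n : ℕ)
    (hn : Fintype.card V = n)
    (hconn : G.Connected)
    (hiso : ∀ v : V, ∃ u : V, G.Adj u v)
    (hγ : domNum G = 1)
    (p : ℝ) (hp0 : 0 < p) (hp1 : p ≤ ((n : ℝ) + 1) / (2 * n)) :
    ∀ π : Equiv.Perm V, pDomNum (prism G π) p = pDomNum G p := by
  intro π
  have hne : Nonempty V := hconn.nonempty
  have hn1 : 1 ≤ n := by
    rw [← hn]; exact Fintype.card_pos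
  have hnpos : (0:ℝ) < n := by exact_mod_cast hn1
  -- get the dominating vertex
  have hset : {k | ∃ S : Set V, IsDomSet G S ∧ S.ncard = k}.Nonempty := by
    refine ⟨Fintype.card V, Set.univ, ?_, by simp [Set.ncard_univ]⟩
    intro v; exact Or.inl (Set.mem_univ v)
  have hdmem := Nat.sInf_mem hset
  rw [show sInf {k | ∃ S : Set V, IsDomSet G S ∧ S.ncard = k} = domNum G from rfl, hγ] at hdmem
  obtain ⟨D, hD, hD1⟩ := hdmem
  obtain ⟨v, rfl⟩ := Set.ncard_eq_one.mp hD1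
  have hdom : ∀ w : V, w = v ∨ G.Adj v w := by
    intro w
    rcases hD w with h | ⟨u, hu, hadj⟩
    · exact Or.inl h
    · rw [Set.mem_singleton_iff] at hu; subst hu; exact Or.inr hadj
  -- p ≤ 1
  have hp1' : p ≤ 1 := by
    refine hp1.trans ?_
    rw [div_le_one (by linarith)]
    have h1n : (1:ℝ) ≤ n := by exact_mod_cast hn1
    linarith
  -- pDomNum G p = 1
  have hG : pDomNum G p = 1 := by
    refine pDomNum_eq_one_of G p hp0 {v} ?_ (Set.ncard_singleton v)
    have huniv : closedNbhd G {v} = Set.univ := by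
      ext w
      simp only [Set.mem_univ, iff_true, closedNbhd, Set.mem_setOf_eq, Set.mem_singleton_iff]
      rcases hdom w with h | h
      · exact Or.inl h
      · exact Or.inr ⟨v, rfl, h⟩
    rw [IsPDomSet, huniv, Set.ncard_univ, Nat.card_eq_fintype_card, div_self (by positivity)]
    exact hp1'
  rw [hG]
  -- prism side
  refine pDomNum_eq_one_of _ p hp0 {Sum.inl v} ?_ (Set.ncard_singleton _)
  have hset2 : closedNbhd (prism G π) {Sum.inl v} =
      Sum.inl '' Set.univ ∪ {Sum.inr (π v)} := by
    ext x
    simp only [closedNbhd, Set.mem_setOf_eq, Set.mem_singleton_iff, Set.mem_union,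
      Set.mem_image, Set.mem_univ, true_and]
    constructor
    · rintro (rfl | ⟨u, rfl, hadj⟩)
      · exact Or.inl ⟨v, rfl⟩
      · cases x with
        | inl b => exact Or.inl ⟨b, rfl⟩
        | inr b => simp only [prism] at hadj; right; rw [hadj]
    · rintro (⟨a, rfl⟩ | rfl)
      · rcases hdom a with rfl | h
        · exact Or.inl rfl
        · exact Or.inr ⟨Sum.inl v, rfl, h⟩
      · exact Or.inr ⟨Sum.inl v, rfl, rfl⟩
  have hcardset : (closedNbhd (prism G π) {Sum.inl v}).ncard = n + 1 := by
    rw [hset2, Set.ncard_union_eq ?_ (Set.toFinite _) (Set.toFinite _)]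
    · rw [Set.ncard_image_of_injective _ Sum.inl_injective, Set.ncard_univ,
        Nat.card_eq_fintype_card, hn, Set.ncard_singleton]
    · rw [Set.disjoint_singleton_right]
      rintro ⟨a, -, h⟩
      exact Sum.inl_ne_inr h
  rw [IsPDomSet, hcardset]
  have hcardV : (Fintype.card (V ⊕ V) : ℝ) = 2 * n := by
    rw [Fintype.card_sum, hn]; push_cast; ring
  rw [hcardV]
  exact_mod_cast hp1
end

section
/- Let G be a connected graph on n vertices without isolated vertices and with domination number γ(G) = 1. Then for every p ∈ ((n+1)/(2n), 1], G is a universal γ_p-doubler; that is, γ_p(πG) = 2·γ_p(G) for every permutation π of V(G). -/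
open SimpleGraph

lemma hempty_aux {W : Type*} [Fintype W] (H : SimpleGraph W) {p : ℝ} (hp : 0 < p) :
    ¬ IsPDomSet H p (∅ : Set W) := by
  intro hS
  have hcn : closedNbhd H (∅ : Set W) = ∅ := by
    ext v; simp [closedNbhd]
  rw [IsPDomSet, hcn, Set.ncard_empty] at hS
  simp only [Nat.cast_zero, zero_div] at hS
  linarith

theorem stmt3 {V : Type*} [Fintype V] (G : SimpleGraph V) (n : ℕ)
    (hn : Fintype.card V = n)
    (hconn : G.Connected)
    (hiso : ∀ v : V, ∃ u : V, G.Adj u v)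
    (hγ : domNum G = 1)
    (p : ℝ) (hp0 : ((n : ℝ) + 1) / (2 * n) < p) (hp1 : p ≤ 1) :

    ∀ π : Equiv.Perm V, pDomNum (prism G π) p = 2 * pDomNum G p := by
  intro π
  have hV : Nonempty V := hconn.nonempty
  have hn1 : 1 ≤ n := hn ▸ Fintype.card_pos
  have hnR : (0:ℝ) < n := by exact_mod_cast hn1
  have hp0' : 0 < p := lt_of_le_of_lt (by positivity : (0:ℝ) ≤ ((n:ℝ)+1)/(2*n)) hp0
  -- extract a dominating vertex
  have hdomset : {k | ∃ S : Set V, IsDomSet G S ∧ S.ncard = k}.Nonempty := by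
    by_contra h
    rw [Set.not_nonempty_iff_eq_empty] at h
    rw [domNum, h, Nat.sInf_empty] at hγ
    exact one_ne_zero hγ.symm
  have h1 : ∃ S : Set V, IsDomSet G S ∧ S.ncard = 1 := by
    unfold domNum at hγ
    rw [← hγ]
    exact Nat.sInf_mem hdomset
  obtain ⟨S0, hS0dom, hS0c⟩ := h1
  obtain ⟨u, rfl⟩ := Set.ncard_eq_one.mp hS0c
  have key : ∀ v : V, v = u ∨ G.Adj u v := by
    intro v
    have hv := hS0dom v
    simpa [closedNbhd] using hv
  have huniv : closedNbhd G {u} = Set.univ := Set.eq_univ_of_forall hS0dom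
  -- pDomNum G p = 1
  have hmem1 : IsPDomSet G p {u} := by
    unfold IsPDomSet
    rw [huniv, Set.ncard_univ, Nat.card_eq_fintype_card, hn, div_self (ne_of_gt hnR)]
    exact hp1
  have hpset1 : (1:ℕ) ∈ {k | ∃ S : Set V, IsPDomSet G p S ∧ S.ncard = k} :=
    ⟨{u}, hmem1, Set.ncard_singleton u⟩
  have hle : pDomNum G p ≤ 1 := Nat.sInf_le hpset1
  have hne0 : pDomNum G p ≠ 0 := by
    intro h
    have hmem : ∃ S : Set V, IsPDomSet G p S ∧ S.ncard = pDomNum G p := by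
      unfold pDomNum
      exact Nat.sInf_mem ⟨1, hpset1⟩
    obtain ⟨S, hS, hSc⟩ := hmem
    rw [h, Set.ncard_eq_zero S.toFinite] at hSc
    subst hSc
    exact hempty_aux G hp0' hS
  have hG1 : pDomNum G p = 1 := le_antisymm hle (Nat.one_le_iff_ne_zero.mpr hne0)
  -- prism: upper bound 2
  have hcard2 : Fintype.card (V ⊕ V) = n + n := by
    rw [Fintype.card_sum, hn]
  have huniv2 : closedNbhd (prism G π) ({Sum.inl u, Sum.inr u} : Set (V ⊕ V)) = Set.univ := by
    apply Set.eq_univ_of_forall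
    rintro (v | v)
    · rcases key v with rfl | hadj
      · exact Or.inl (by simp)
      · exact Or.inr ⟨Sum.inl u, by simp, hadj⟩
    · rcases key v with rfl | hadj
      · exact Or.inl (by simp)
      · exact Or.inr ⟨Sum.inr u, by simp, hadj⟩
  have hmem2 : IsPDomSet (prism G π) p ({Sum.inl u, Sum.inr u} : Set (V ⊕ V)) := by
    unfold IsPDomSet
    rw [huniv2, Set.ncard_univ, Nat.card_eq_fintype_card, hcard2]
    push_cast
    rw [div_self (by positivity : ((n:ℝ)+n) ≠ 0)]
    exact hp1
  have hpset2 : (2:ℕ) ∈ {k | ∃ S : Set (V ⊕ V), IsPDomSet (prism G π) p S ∧ S.ncard = k} :=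
    ⟨{Sum.inl u, Sum.inr u}, hmem2, Set.ncard_pair (by simp)⟩
  have hle2 : pDomNum (prism G π) p ≤ 2 := Nat.sInf_le hpset2
  -- bound on closed neighborhood of a single vertex in the prism
  have hbound : ∀ x : V ⊕ V, (closedNbhd (prism G π) {x}).ncard ≤ n + 1 := by
    intro x
    have haux : ∀ (T : Set (V ⊕ V)) (f : V → V ⊕ V) (z : V ⊕ V),
        Function.Injective f → T ⊆ (f '' Set.univ) ∪ {z} → T.ncard ≤ n + 1 := by
      intro T f z hf hsub
      calc T.ncard ≤ ((f '' Set.univ) ∪ {z} : Set (V ⊕ V)).ncard :=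
            Set.ncard_le_ncard hsub (Set.toFinite _)
        _ ≤ (f '' Set.univ : Set (V ⊕ V)).ncard + ({z} : Set (V ⊕ V)).ncard :=
            Set.ncard_union_le _ _
        _ ≤ n + 1 := by
            rw [Set.ncard_image_of_injective _ hf, Set.ncard_univ,
              Nat.card_eq_fintype_card, hn, Set.ncard_singleton]
    rcases x with a | a
    · refine haux _ Sum.inl (Sum.inr (π a)) Sum.inl_injective ?_
      rintro (b | b) hy
      · exact Or.inl ⟨b, trivial, rfl⟩
      · rcases hy with hy | ⟨w, hw, hadj⟩
        · simp at hy
        · simp only [Set.mem_singleton_iff] at hw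
          subst hw
          have : π a = b := hadj
          right
          simp [← this]
    · refine haux _ Sum.inr (Sum.inl (π.symm a)) Sum.inr_injective ?_
      rintro (b | b) hy
      · rcases hy with hy | ⟨w, hw, hadj⟩
        · simp at hy
        · simp only [Set.mem_singleton_iff] at hw
          subst hw
          have hb : π b = a := hadj
          right
          have : b = π.symm a := by
            rw [← hb]; simp
          simp [this]
      · exact Or.inl ⟨b, trivial, rfl⟩
  -- lower bound 2
  have hmemk : ∃ S : Set (V ⊕ V), IsPDomSet (prism G π) p S ∧ S.ncard = pDomNum (prism G π) p := by
    unfold pDomNum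
    exact Nat.sInf_mem ⟨2, hpset2⟩
  obtain ⟨S, hS, hSc⟩ := hmemk
  have h0 : S.ncard ≠ 0 := by
    intro h
    rw [Set.ncard_eq_zero S.toFinite] at h
    subst h
    exact hempty_aux (prism G π) hp0' hS
  have h1' : S.ncard ≠ 1 := by
    intro h
    obtain ⟨x, rfl⟩ := Set.ncard_eq_one.mp h
    have hb := hbound x
    rw [IsPDomSet, hcard2] at hS
    have h2n : (0:ℝ) < (n:ℝ) + n := by linarith
    have hA : (n:ℝ) + 1 < p * (2*n) := (div_lt_iff₀ (by linarith)).mp hp0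
    have hB : p * ((n:ℝ) + n) ≤ ((closedNbhd (prism G π) {x}).ncard : ℝ) :=
      (le_div_iff₀ h2n).mp (by exact_mod_cast hS)
    have hC : ((closedNbhd (prism G π) {x}).ncard : ℝ) ≤ (n:ℝ) + 1 := by
      exact_mod_cast hb
    nlinarith
  have hk2 : pDomNum (prism G π) p = 2 := by omega
  rw [hk2, hG1]
end

section
/- Let G be the path P_n on n ≥ 2 vertices. Then for every permutation π of V(G), γ_{(n+γ(G))/(2n)}(πG) = γ(G); that is, the p-domination number of the prism with p = (n+γ(G))/(2n) equals the domination number of G. -/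
open SimpleGraph

lemma closedNbhd_insert {V : Type*} (G : SimpleGraph V) (a : V) (S : Set V) :
    closedNbhd G (insert a S) = closedNbhd G {a} ∪ closedNbhd G S := by
  ext v; simp only [closedNbhd, Set.mem_insert_iff, Set.mem_setOf_eq, Set.mem_union,
    Set.mem_singleton_iff]
  constructor
  · rintro (h | ⟨u, (rfl | hu), hadj⟩)
    · rcases h with rfl | h
      · exact Or.inl (Or.inl rfl)
      · exact Or.inr (Or.inl h)
    · exact Or.inl (Or.inr ⟨u, rfl, hadj⟩)
    · exact Or.inr (Or.inr ⟨u, hu, hadj⟩)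
  · rintro ((rfl | ⟨u, rfl, hadj⟩) | (h | ⟨u, hu, hadj⟩))
    · exact Or.inl (Or.inl rfl)
    · exact Or.inr ⟨u, Or.inl rfl, hadj⟩
    · exact Or.inl (Or.inr h)
    · exact Or.inr ⟨u, Or.inr hu, hadj⟩

lemma single_bound {n : ℕ} (π : Equiv.Perm (Fin n)) (u : Fin n ⊕ Fin n) :
    (closedNbhd (prism (pathGraph n) π) {u}).ncard ≤ 4 := by
  have hn0 : 0 < n := by
    rcases u with a | a <;> exact a.pos
  obtain (a | a) := u
  · set x : Fin n ⊕ Fin n := if h : a.val + 1 < n then Sum.inl ⟨a.val + 1, h⟩ else Sum.inl a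
    set y : Fin n ⊕ Fin n := if h : 0 < a.val then Sum.inl ⟨a.val - 1, by omega⟩ else Sum.inl a
    have hsub : closedNbhd (prism (pathGraph n) π) {Sum.inl a}
        ⊆ {Sum.inl a, Sum.inr (π a), x, y} := by
      rintro (v | v) hv
      · simp only [closedNbhd, Set.mem_singleton_iff, Set.mem_setOf_eq] at hv
        rcases hv with h | ⟨w, rfl, hadj⟩
        · simp [h]
        · simp only [prism] at hadj
          rw [pathGraph_adj] at hadj
          rcases hadj with h | h
          · have : x = Sum.inl v := by
              simp only [x]; rw [dif_pos (h ▸ v.isLt)]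
              congr 1; exact Fin.ext (by simp only [Fin.val_mk]; omega)
            simp [← this]
          · have : y = Sum.inl v := by
              simp only [y]; rw [dif_pos (by omega : 0 < a.val)]
              congr 1; exact Fin.ext (by simp only [Fin.val_mk]; omega)
            simp [← this]
      · simp only [closedNbhd, Set.mem_singleton_iff, Set.mem_setOf_eq] at hv
        rcases hv with h | ⟨w, rfl, hadj⟩
        · exact absurd h (by simp)
        · simp only [prism] at hadj
          subst hadj; simp
    calc (closedNbhd (prism (pathGraph n) π) {Sum.inl a}).ncard
        ≤ ({Sum.inl a, Sum.inr (π a), x, y} : Set (Fin n ⊕ Fin n)).ncard :=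
          Set.ncard_le_ncard hsub (Set.toFinite _)
      _ ≤ 4 := by
          apply le_trans (Set.ncard_insert_le _ _)
          have := Set.ncard_insert_le (Sum.inr (π a) : Fin n ⊕ Fin n) ({x, y} : Set (Fin n ⊕ Fin n))
          have := Set.ncard_insert_le x ({y} : Set (Fin n ⊕ Fin n))
          simp [Set.ncard_singleton] at *
          omega
  · set x : Fin n ⊕ Fin n := if h : a.val + 1 < n then Sum.inr ⟨a.val + 1, h⟩ else Sum.inr a
    set y : Fin n ⊕ Fin n := if h : 0 < a.val then Sum.inr ⟨a.val - 1, by omega⟩ else Sum.inr a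
    have hsub : closedNbhd (prism (pathGraph n) π) {Sum.inr a}
        ⊆ {Sum.inr a, Sum.inl (π.symm a), x, y} := by
      rintro (v | v) hv
      · simp only [closedNbhd, Set.mem_singleton_iff, Set.mem_setOf_eq] at hv
        rcases hv with h | ⟨w, rfl, hadj⟩
        · exact absurd h (by simp)
        · simp only [prism] at hadj
          have : v = π.symm a := by rw [← hadj]; simp
          simp [this]
      · simp only [closedNbhd, Set.mem_singleton_iff, Set.mem_setOf_eq] at hv
        rcases hv with h | ⟨w, rfl, hadj⟩
        · simp [h]
        · simp only [prism] at hadj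
          rw [pathGraph_adj] at hadj
          rcases hadj with h | h
          · have : x = Sum.inr v := by
              simp only [x]; rw [dif_pos (h ▸ v.isLt)]
              congr 1; exact Fin.ext (by simp only [Fin.val_mk]; omega)
            simp [← this]
          · have : y = Sum.inr v := by
              simp only [y]; rw [dif_pos (by omega : 0 < a.val)]
              congr 1; exact Fin.ext (by simp only [Fin.val_mk]; omega)
            simp [← this]
    calc (closedNbhd (prism (pathGraph n) π) {Sum.inr a}).ncard
        ≤ ({Sum.inr a, Sum.inl (π.symm a), x, y} : Set (Fin n ⊕ Fin n)).ncard :=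
          Set.ncard_le_ncard hsub (Set.toFinite _)
      _ ≤ 4 := by
          apply le_trans (Set.ncard_insert_le _ _)
          have := Set.ncard_insert_le (Sum.inl (π.symm a) : Fin n ⊕ Fin n) ({x, y} : Set (Fin n ⊕ Fin n))
          have := Set.ncard_insert_le x ({y} : Set (Fin n ⊕ Fin n))
          simp [Set.ncard_singleton] at *
          omega


lemma nbhd_bound {n : ℕ} (π : Equiv.Perm (Fin n)) (S : Set (Fin n ⊕ Fin n)) :
    (closedNbhd (prism (pathGraph n) π) S).ncard ≤ 4 * S.ncard := by
  refine Set.Finite.induction_on (motive := fun S _ => (closedNbhd (prism (pathGraph n) π) S).ncard ≤ 4 * S.ncard) S (Set.toFinite S) (by simp [closedNbhd]) ?_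
  intro a S ha hS ih
  rw [closedNbhd_insert, Set.ncard_insert_of_notMem ha hS]
  calc (closedNbhd (prism (pathGraph n) π) {a} ∪ closedNbhd (prism (pathGraph n) π) S).ncard
      ≤ (closedNbhd (prism (pathGraph n) π) {a}).ncard
        + (closedNbhd (prism (pathGraph n) π) S).ncard :=
        Set.ncard_union_le _ _
    _ ≤ 4 + 4 * S.ncard := add_le_add (single_bound π a) ih
    _ = 4 * (S.ncard + 1) := by ring

lemma small_dom {n : ℕ} (hn : 2 ≤ n) :
    ∃ D : Set (Fin n), IsDomSet (pathGraph n) D ∧ 3 * D.ncard ≤ n + 2 := by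
  have hkn : ∀ j : Fin ((n + 2) / 3), min (3 * j.val + 1) (n - 1) < n := by
    intro j; have := j.isLt; omega
  refine ⟨Set.range (fun j : Fin ((n + 2) / 3) =>
    (⟨min (3 * j.val + 1) (n - 1), hkn j⟩ : Fin n)), ?_, ?_⟩
  · intro v
    have hv := v.isLt
    have hj : v.val / 3 < (n + 2) / 3 := by omega
    rcases Nat.lt_trichotomy (v.val % 3) 1 with h1 | h1 | h1
    · by_cases h2 : v.val + 1 < n
      · right
        refine ⟨_, ⟨⟨v.val / 3, hj⟩, rfl⟩, ?_⟩
        rw [pathGraph_adj]; right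
        show v.val + 1 = min (3 * (v.val / 3) + 1) (n - 1); omega
      · left
        exact ⟨⟨v.val / 3, hj⟩, Fin.ext (by show min (3 * (v.val / 3) + 1) (n - 1) = v.val; omega)⟩
    · left
      exact ⟨⟨v.val / 3, hj⟩, Fin.ext (by show min (3 * (v.val / 3) + 1) (n - 1) = v.val; omega)⟩
    · right
      refine ⟨_, ⟨⟨v.val / 3, hj⟩, rfl⟩, ?_⟩
      rw [pathGraph_adj]; left
      show min (3 * (v.val / 3) + 1) (n - 1) + 1 = v.val; omega
  · have hinj : Function.Injective (fun j : Fin ((n + 2) / 3) =>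
        (⟨min (3 * j.val + 1) (n - 1), hkn j⟩ : Fin n)) := by
      intro i j h
      have hi := i.isLt; have hj := j.isLt
      have h2 : min (3 * i.val + 1) (n - 1) = min (3 * j.val + 1) (n - 1) :=
        congrArg Fin.val h
      exact Fin.ext (by omega)
    rw [← Set.image_univ, Set.ncard_image_of_injective _ hinj, Set.ncard_univ,
      Nat.card_eq_fintype_card, Fintype.card_fin]
    omega


lemma prism_upper {n : ℕ} (π : Equiv.Perm (Fin n)) (D : Set (Fin n))
    (hD : IsDomSet (pathGraph n) D) :
    n + D.ncard ≤ (closedNbhd (prism (pathGraph n) π) (Sum.inl '' D)).ncard := by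
  have hsub : Sum.inl '' (Set.univ : Set (Fin n)) ∪ Sum.inr '' (π '' D)
      ⊆ closedNbhd (prism (pathGraph n) π) (Sum.inl '' D) := by
    rintro x (⟨a, -, rfl⟩ | ⟨b, hb, rfl⟩)
    · rcases hD a with h | ⟨u, hu, hadj⟩
      · exact Or.inl ⟨a, h, rfl⟩
      · exact Or.inr ⟨Sum.inl u, ⟨u, hu, rfl⟩, hadj⟩
    · obtain ⟨d, hd, rfl⟩ := hb
      exact Or.inr ⟨Sum.inl d, ⟨d, hd, rfl⟩, rfl⟩
  have hdisj : Disjoint ((Sum.inl '' (Set.univ : Set (Fin n)) : Set (Fin n ⊕ Fin n))) (Sum.inr '' (π '' D)) := by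
    rw [Set.disjoint_left]
    rintro x ⟨a, -, rfl⟩ ⟨b, -, h⟩
    exact Sum.inl_ne_inr h.symm
  have h1 : ((Sum.inl '' (Set.univ : Set (Fin n)) : Set (Fin n ⊕ Fin n))).ncard = n := by
    rw [Set.ncard_image_of_injective _ Sum.inl_injective, Set.ncard_univ,
      Nat.card_eq_fintype_card, Fintype.card_fin]
  have h2 : (Sum.inr '' (π '' D) : Set (Fin n ⊕ Fin n)).ncard = D.ncard := by
    rw [Set.ncard_image_of_injective _ Sum.inr_injective,
      Set.ncard_image_of_injective _ π.injective]
  calc n + D.ncard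
      = ((Sum.inl '' (Set.univ : Set (Fin n)) ∪ Sum.inr '' (π '' D) : Set (Fin n ⊕ Fin n))).ncard := by
        rw [Set.ncard_union_eq hdisj (Set.toFinite _) (Set.toFinite _), h1, h2]
    _ ≤ _ := Set.ncard_le_ncard hsub (Set.toFinite _)


theorem stmt5 (n : ℕ) (hn : 2 ≤ n) (π : Equiv.Perm (Fin n)) :
    pDomNum (prism (SimpleGraph.pathGraph n) π)
        (((n : ℝ) + domNum (SimpleGraph.pathGraph n)) / (2 * n))
      = domNum (SimpleGraph.pathGraph n) := by
  have hcard : Fintype.card (Fin n ⊕ Fin n) = 2 * n := by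
    simp [Fintype.card_sum]; ring
  have h2n : (0 : ℝ) < 2 * n := by positivity
  have hDne : {k | ∃ S : Set (Fin n), IsDomSet (pathGraph n) S ∧ S.ncard = k}.Nonempty :=
    ⟨(Set.univ : Set (Fin n)).ncard, Set.univ, fun v => Or.inl trivial, rfl⟩
  obtain ⟨D, hD, hDcard⟩ : ∃ S : Set (Fin n), IsDomSet (pathGraph n) S ∧
      S.ncard = domNum (pathGraph n) := Nat.sInf_mem hDne
  obtain ⟨D', hD', hD'3⟩ := small_dom hn
  have hγ3 : 3 * domNum (pathGraph n) ≤ n + 2 :=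
    le_trans (Nat.mul_le_mul_left 3 (Nat.sInf_le ⟨D', hD', rfl⟩)) hD'3
  have hbig := prism_upper π D hD
  rw [hDcard] at hbig
  have hpdom : IsPDomSet (prism (pathGraph n) π)
      (((n : ℝ) + domNum (pathGraph n)) / (2 * n)) (Sum.inl '' D) := by
    unfold IsPDomSet
    rw [hcard]
    push_cast
    rw [div_le_div_iff₀ h2n h2n]
    have : ((n : ℝ) + domNum (pathGraph n))
        ≤ ((closedNbhd (prism (pathGraph n) π) (Sum.inl '' D)).ncard : ℝ) := by
      exact_mod_cast hbig
    nlinarith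
  have hTcard : (Sum.inl '' D : Set (Fin n ⊕ Fin n)).ncard = domNum (pathGraph n) := by
    rw [Set.ncard_image_of_injective _ Sum.inl_injective, hDcard]
  have hPne : {k | ∃ S : Set (Fin n ⊕ Fin n),
      IsPDomSet (prism (pathGraph n) π)
        (((n : ℝ) + domNum (pathGraph n)) / (2 * n)) S ∧ S.ncard = k}.Nonempty :=
    ⟨domNum (pathGraph n), Sum.inl '' D, hpdom, hTcard⟩
  have hub : pDomNum (prism (pathGraph n) π)
      (((n : ℝ) + domNum (pathGraph n)) / (2 * n)) ≤ domNum (pathGraph n) :=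
    Nat.sInf_le ⟨Sum.inl '' D, hpdom, hTcard⟩
  obtain ⟨S, hS, hScard⟩ : ∃ S : Set (Fin n ⊕ Fin n),
      IsPDomSet (prism (pathGraph n) π)
        (((n : ℝ) + domNum (pathGraph n)) / (2 * n)) S ∧
      S.ncard = pDomNum (prism (pathGraph n) π)
        (((n : ℝ) + domNum (pathGraph n)) / (2 * n)) := Nat.sInf_mem hPne
  have hlb : domNum (pathGraph n) ≤ pDomNum (prism (pathGraph n) π)
      (((n : ℝ) + domNum (pathGraph n)) / (2 * n)) := by
    rw [← hScard]
    unfold IsPDomSet at hS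
    rw [hcard] at hS
    push_cast at hS
    rw [div_le_div_iff₀ h2n h2n] at hS
    have hclosed : n + domNum (pathGraph n)
        ≤ (closedNbhd (prism (pathGraph n) π) S).ncard := by
      have : ((n : ℝ) + domNum (pathGraph n))
          ≤ ((closedNbhd (prism (pathGraph n) π) S).ncard : ℝ) := by
        nlinarith
      exact_mod_cast this
    have h4 := nbhd_bound π S
    omega
  omega
end

section
/- Let G be the cycle C_n on n ≥ 3 vertices. Then for every permutation π of V(G), γ_{(n+γ(G))/(2n)}(πG) = γ(G); that is, the p-domination number of the prism with p = (n+γ(G))/(2n) equals the domination number of G. -/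
open SimpleGraph

/- ============ auxiliary lemmas ============ -/

lemma cyc_adj {n : ℕ} (hn : 2 ≤ n) (u v : Fin n) (h : (u.val + 1) % n = v.val) :
    (SimpleGraph.cycleGraph n).Adj u v := by
  rw [SimpleGraph.cycleGraph_adj']
  right
  have hu := u.isLt
  have hv := v.isLt
  have key : (n - u.val + v.val) % n = 1 := by
    rcases Nat.lt_or_ge (u.val + 1) n with hl | hge
    · have hv' : v.val = u.val + 1 := by rw [← h]; exact Nat.mod_eq_of_lt hl
      have h1 : n - u.val + v.val = n + 1 := by omega
      rw [h1, Nat.add_mod_left]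
      exact Nat.mod_eq_of_lt (by omega)
    · have he : u.val + 1 = n := by omega
      have hv' : v.val = 0 := by
        rw [← h, he]; exact Nat.mod_self n
      have h1 : n - u.val + v.val = 1 := by omega
      rw [h1]
      exact Nat.mod_eq_of_lt (by omega)
  rw [Fin.sub_def]
  exact key

lemma cyc_adj_val {n : ℕ} (hn : 2 ≤ n) {u v : Fin n} (h : (SimpleGraph.cycleGraph n).Adj u v) :
    haveI : NeZero n := ⟨by omega⟩
    v = u - 1 ∨ v = u + 1 := by
  haveI : NeZero n := ⟨by omega⟩
  rw [SimpleGraph.cycleGraph_adj'] at h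
  have h1 : (1 : Fin n).val = 1 := by
    rw [Fin.val_one']; exact Nat.mod_eq_of_lt (by omega)
  rcases h with h | h
  · left
    have : u - v = 1 := by apply Fin.ext; rw [h1]; exact h
    have : v = u - (u - v) := (sub_sub_cancel u v).symm
    rw [‹u - v = 1›] at this
    exact this
  · right
    have : v - u = 1 := by apply Fin.ext; rw [h1]; exact h
    have h2 : v = u + (v - u) := (add_sub_cancel u v).symm
    rw [‹v - u = 1›] at h2
    exact h2

/-- A dominating set of the cycle of size at most `(n+2)/3`. -/
lemma cycle_domset {n : ℕ} (hn : 3 ≤ n) :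
    ∃ D : Set (Fin n), IsDomSet (SimpleGraph.cycleGraph n) D ∧ D.ncard ≤ (n + 2) / 3 := by
  set m := (n + 2) / 3 with hm
  have hmn : 3 * m ≥ n := by omega
  have hfb : ∀ i : ℕ, i < m → 3 * i < n := fun i hi => by omega
  let f : Fin m → Fin n := fun i => ⟨3 * i.val, hfb i.val i.isLt⟩
  refine ⟨Set.range f, ?_, ?_⟩
  · intro v
    set q := v.val / 3 with hq
    set r := v.val % 3 with hr
    have hv : v.val = 3 * q + r ∧ r < 3 := by omega
    have hvn := v.isLt
    rcases hv with ⟨hv, hr3⟩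
    interval_cases r
    · left
      refine ⟨⟨q, by omega⟩, ?_⟩
      apply Fin.ext
      show 3 * q = v.val
      omega
    · right
      refine ⟨f ⟨q, by omega⟩, ⟨_, rfl⟩, ?_⟩
      apply cyc_adj (by omega)
      show (3 * q + 1) % n = v.val
      rw [Nat.mod_eq_of_lt (by omega)]; omega
    · right
      by_cases hlast : v.val + 1 < n
      · refine ⟨f ⟨q + 1, by omega⟩, ⟨_, rfl⟩, ?_⟩
        refine (cyc_adj (by omega) v _ ?_).symm
        show (v.val + 1) % n = 3 * (q + 1)
        rw [Nat.mod_eq_of_lt (by omega)]; omega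
      · refine ⟨f ⟨0, by omega⟩, ⟨_, rfl⟩, ?_⟩
        refine (cyc_adj (by omega) v _ ?_).symm
        show (v.val + 1) % n = 3 * 0
        have : v.val + 1 = n := by omega
        rw [this]; simp
  · rw [← Set.image_univ]
    calc (f '' Set.univ).ncard ≤ (Set.univ : Set (Fin m)).ncard :=
          Set.ncard_image_le (Set.toFinite _)
      _ = m := by rw [Set.ncard_univ]; simp

lemma biUnion_ncard_le {α β : Type*} [DecidableEq α] (t : Finset α) (f : α → Set β) :
    (⋃ a ∈ t, f a).ncard ≤ ∑ a ∈ t, (f a).ncard := by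
  induction t using Finset.induction_on with
  | empty => simp
  | @insert b t hb ih =>
    rw [Finset.set_biUnion_insert, Finset.sum_insert hb]
    exact (Set.ncard_union_le _ _).trans (Nat.add_le_add_left ih _)

/-- closed neighborhoods in the prism of a cycle have at most 4 elements each -/
lemma prism_cl_card {n : ℕ} (hn : 3 ≤ n) (π : Equiv.Perm (Fin n))
    (S : Set (Fin n ⊕ Fin n)) :
    (closedNbhd (prism (SimpleGraph.cycleGraph n) π) S).ncard ≤ 4 * S.ncard := by
  classical
  haveI : NeZero n := ⟨by omega⟩
  set G := prism (SimpleGraph.cycleGraph n) π with hG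
  set N : (Fin n ⊕ Fin n) → Set (Fin n ⊕ Fin n) := fun u => insert u (G.neighborSet u) with hN
  have hcl : closedNbhd G S = ⋃ u ∈ S, N u := by
    ext v
    simp only [closedNbhd, Set.mem_setOf_eq, Set.mem_iUnion, hN, Set.mem_insert_iff,
      SimpleGraph.mem_neighborSet]
    constructor
    · rintro (h | ⟨u, hu, hadj⟩)
      · exact ⟨v, h, Or.inl rfl⟩
      · exact ⟨u, hu, Or.inr hadj⟩
    · rintro ⟨u, hu, rfl | hadj⟩
      · exact Or.inl hu
      · exact Or.inr ⟨u, hu, hadj⟩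
  have hNle : ∀ u, (N u).ncard ≤ 4 := by
    intro u
    have hsub : ∀ (a : Fin n),
        (SimpleGraph.cycleGraph n).neighborSet a ⊆ {a - 1, a + 1} := by
      intro a x hx
      rcases cyc_adj_val (by omega) hx with h | h
      · exact Or.inl h
      · exact Or.inr h
    have key : ∃ (x y z : Fin n ⊕ Fin n), N u ⊆ {u, x, y, z} := by
      rcases u with a | a
      · refine ⟨Sum.inl (a - 1), Sum.inl (a + 1), Sum.inr (π a), ?_⟩
        rintro x (rfl | hx)
        · exact Or.inl rfl
        · rcases x with b | b
          · have hadj : (SimpleGraph.cycleGraph n).Adj a b := hx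
            rcases hsub a hadj with h | h
            · subst h; simp
            · subst h; simp
          · have hb : π a = b := hx
            subst hb; simp
      · refine ⟨Sum.inr (a - 1), Sum.inr (a + 1), Sum.inl (π.symm a), ?_⟩
        rintro x (rfl | hx)
        · exact Or.inl rfl
        · rcases x with b | b
          · have hb : π b = a := hx
            have : b = π.symm a := by rw [← hb]; simp
            subst this; simp
          · have hadj : (SimpleGraph.cycleGraph n).Adj a b := hx
            rcases hsub a hadj with h | h
            · subst h; simp
            · subst h; simp
    obtain ⟨x, y, z, hsub4⟩ := key
    calc (N u).ncard ≤ ({u, x, y, z} : Set _).ncard :=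
          Set.ncard_le_ncard hsub4 (Set.toFinite _)
      _ ≤ ({x, y, z} : Set _).ncard + 1 := Set.ncard_insert_le _ _
      _ ≤ (({y, z} : Set _).ncard + 1) + 1 :=
          Nat.add_le_add_right (Set.ncard_insert_le _ _) _
      _ ≤ ((({z} : Set _).ncard + 1) + 1) + 1 :=
          Nat.add_le_add_right (Nat.add_le_add_right (Set.ncard_insert_le _ _) _) _
      _ ≤ 4 := by simp
  set t := S.toFinite.toFinset with ht
  have hst : S = ↑t := (Set.Finite.coe_toFinset _).symm
  have hcl2 : closedNbhd G S = ⋃ u ∈ t, N u := by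
    rw [hcl, hst, Finset.set_biUnion_coe]
  rw [hcl2]
  calc (⋃ u ∈ t, N u).ncard ≤ ∑ u ∈ t, (N u).ncard := biUnion_ncard_le t N
    _ ≤ ∑ _u ∈ t, 4 := Finset.sum_le_sum fun u _ => hNle u
    _ = 4 * S.ncard := by
        rw [Finset.sum_const, smul_eq_mul, mul_comm, Set.ncard_eq_toFinset_card S S.toFinite]

theorem stmt6_aux_nonempty (n : ℕ) :
    ∃ k, ∃ S : Set (Fin n), IsDomSet (SimpleGraph.cycleGraph n) S ∧ S.ncard = k :=
  ⟨_, Set.univ, fun v => Or.inl (Set.mem_univ v), rfl⟩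

theorem stmt6 (n : ℕ) (hn : 3 ≤ n) (π : Equiv.Perm (Fin n)) :
    pDomNum (prism (SimpleGraph.cycleGraph n) π)
        (((n : ℝ) + domNum (SimpleGraph.cycleGraph n)) / (2 * n))
      = domNum (SimpleGraph.cycleGraph n) := by
  classical
  set γ := domNum (SimpleGraph.cycleGraph n) with hγ
  -- a minimum dominating set
  obtain ⟨D, hD, hDcard⟩ :
      ∃ S : Set (Fin n), IsDomSet (SimpleGraph.cycleGraph n) S ∧ S.ncard = γ :=
    Nat.sInf_mem (stmt6_aux_nonempty n)
  -- 3γ ≤ n + 2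
  have h3γ : 3 * γ ≤ n + 2 := by
    obtain ⟨D', hD', hD'card⟩ := cycle_domset hn
    have : γ ≤ D'.ncard := Nat.sInf_le ⟨D', hD', rfl⟩
    omega
  have hcard : (Fintype.card (Fin n ⊕ Fin n) : ℝ) = 2 * n := by
    simp [Fintype.card_sum]; ring
  have h2n : (0 : ℝ) < 2 * n := by positivity
  set G := prism (SimpleGraph.cycleGraph n) π with hG
  set p : ℝ := ((n : ℝ) + γ) / (2 * n) with hp
  -- membership : γ is achieved by a p-dominating set
  have hmem : γ ∈ {k | ∃ S : Set (Fin n ⊕ Fin n), IsPDomSet G p S ∧ S.ncard = k} := by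
    refine ⟨Sum.inl '' D, ?_, ?_⟩
    · -- p-dominating
      have hsub : (Set.range Sum.inl ∪ (Sum.inr ∘ π) '' D : Set (Fin n ⊕ Fin n))
          ⊆ closedNbhd G (Sum.inl '' D) := by
        rintro x (⟨v, rfl⟩ | ⟨u, hu, rfl⟩)
        · rcases hD v with h | ⟨u, hu, hadj⟩
          · exact Or.inl ⟨v, h, rfl⟩
          · exact Or.inr ⟨Sum.inl u, ⟨u, hu, rfl⟩, hadj⟩
        · exact Or.inr ⟨Sum.inl u, ⟨u, hu, rfl⟩, rfl⟩
      have hdisj : Disjoint (Set.range (Sum.inl : Fin n → Fin n ⊕ Fin n))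
          ((Sum.inr ∘ π) '' D) := by
        rw [Set.disjoint_left]
        rintro x ⟨v, rfl⟩ ⟨u, hu, h⟩
        simp at h
      have hcard1 : (Set.range (Sum.inl : Fin n → Fin n ⊕ Fin n)).ncard = n := by
        rw [← Set.image_univ, Set.ncard_image_of_injective _ Sum.inl_injective,
          Set.ncard_univ]; simp
      have hcard2 : ((Sum.inr ∘ π : Fin n → Fin n ⊕ Fin n) '' D).ncard = γ := by
        rw [Set.ncard_image_of_injective _ (Sum.inr_injective.comp π.injective), hDcard]
      have hle : n + γ ≤ (closedNbhd G (Sum.inl '' D)).ncard := by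
        calc n + γ = (Set.range (Sum.inl : Fin n → Fin n ⊕ Fin n)
              ∪ (Sum.inr ∘ π) '' D).ncard := by
              rw [Set.ncard_union_eq hdisj (Set.toFinite _) (Set.toFinite _), hcard1, hcard2]
          _ ≤ _ := Set.ncard_le_ncard hsub (Set.toFinite _)
      rw [IsPDomSet, hcard, hp]
      rw [div_le_div_iff_of_pos_right h2n]
      exact_mod_cast hle
    · rw [Set.ncard_image_of_injective _ Sum.inl_injective, hDcard]
  -- lower bound : every p-dominating set has at least γ vertices
  have hlb : ∀ k ∈ {k | ∃ S : Set (Fin n ⊕ Fin n), IsPDomSet G p S ∧ S.ncard = k}, γ ≤ k := by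
    rintro k ⟨S, hS, rfl⟩
    have h1 : ((n : ℝ) + γ) ≤ (closedNbhd G S).ncard := by
      rw [IsPDomSet, hcard, hp] at hS
      exact (div_le_div_iff_of_pos_right h2n).mp hS
    have h1' : n + γ ≤ (closedNbhd G S).ncard := by exact_mod_cast h1
    have h2 : (closedNbhd G S).ncard ≤ 4 * S.ncard := prism_cl_card hn π S
    omega
  -- conclude
  rw [pDomNum]
  refine le_antisymm (Nat.sInf_le hmem) ?_
  exact hlb _ (Nat.sInf_mem ⟨γ, hmem⟩)
end

section
/- Let G be any graph on n vertices and π any permutation of V(G). Then γ_{(n+γ(G))/(2n)}(πG) = 1 if and only if γ(G) = 1. -/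
open SimpleGraph

lemma cn_empty {V : Type*} (G : SimpleGraph V) : closedNbhd G (∅ : Set V) = ∅ := by
  ext v; simp [closedNbhd]

lemma cn_prism_inl {V : Type*} (G : SimpleGraph V) (π : Equiv.Perm V) (v : V) :
    closedNbhd (prism G π) {Sum.inl v} = Sum.inl '' closedNbhd G {v} ∪ {Sum.inr (π v)} := by
  ext x
  rcases x with a | a <;> simp [closedNbhd, prism, eq_comm]

lemma cn_prism_inr {V : Type*} (G : SimpleGraph V) (π : Equiv.Perm V) (v : V) :
    closedNbhd (prism G π) {Sum.inr v} = Sum.inr '' closedNbhd G {v} ∪ {Sum.inl (π.symm v)} := by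
  ext x
  rcases x with a | a <;>
    simp [closedNbhd, prism, eq_comm, Equiv.eq_symm_apply]

lemma ncard_inl_union {V : Type*} [Fintype V] (T : Set V) (w : V) :
    (Sum.inl '' T ∪ {Sum.inr w} : Set (V ⊕ V)).ncard = T.ncard + 1 := by
  rw [Set.ncard_union_eq (by simp) (Set.toFinite _) (Set.toFinite _),
    Set.ncard_image_of_injective _ Sum.inl_injective, Set.ncard_singleton]

lemma ncard_inr_union {V : Type*} [Fintype V] (T : Set V) (w : V) :
    (Sum.inr '' T ∪ {Sum.inl w} : Set (V ⊕ V)).ncard = T.ncard + 1 := by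
  rw [Set.ncard_union_eq (by simp) (Set.toFinite _) (Set.toFinite _),
    Set.ncard_image_of_injective _ Sum.inr_injective, Set.ncard_singleton]

lemma domNum_ge_one {V : Type*} [Fintype V] [Nonempty V] (G : SimpleGraph V) :
    1 ≤ domNum G := by
  have hne : {k | ∃ S : Set V, IsDomSet G S ∧ S.ncard = k}.Nonempty :=
    ⟨Fintype.card V, Set.univ, fun v => Or.inl (Set.mem_univ v),
      by rw [Set.ncard_univ, Nat.card_eq_fintype_card]⟩
  obtain ⟨S, hS, hcard⟩ := Nat.sInf_mem hne
  rw [Nat.one_le_iff_ne_zero]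
  intro h0
  rw [domNum] at h0
  rw [h0, Set.ncard_eq_zero (Set.toFinite _)] at hcard
  obtain ⟨v⟩ := ‹Nonempty V›
  have := hS v
  rw [hcard, cn_empty] at this
  exact this

lemma pdom_to_bound {V : Type*} [Fintype V] (G : SimpleGraph V) (n : ℕ)
    (hn : Fintype.card V = n) (π : Equiv.Perm V) (x : V ⊕ V)
    (hS : IsPDomSet (prism G π) (((n : ℝ) + domNum G) / (2 * n)) {x}) :
    domNum G = 1 := by
  have hpos : (0 : ℝ) < 2 * n := by
    have : 0 < n := by
      rw [← hn, Fintype.card_pos_iff]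
      rcases x with v | v <;> exact ⟨v⟩
    positivity
  have hVne : Nonempty V := by rcases x with v | v <;> exact ⟨v⟩
  -- the closed nbhd of {x} has ncard = t + 1 with t ≤ n
  obtain ⟨v, t, ht, htn⟩ : ∃ (v : V) (t : ℕ),
      (closedNbhd (prism G π) {x}).ncard = t + 1 ∧ t ≤ n := by
    rcases x with v | v
    · refine ⟨v, (closedNbhd G {v}).ncard, by rw [cn_prism_inl, ncard_inl_union], ?_⟩
      calc (closedNbhd G {v}).ncard ≤ (Set.univ : Set V).ncard :=
            Set.ncard_le_ncard (Set.subset_univ _) (Set.toFinite _)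
        _ = n := by rw [Set.ncard_univ, Nat.card_eq_fintype_card, hn]
    · refine ⟨v, (closedNbhd G {v}).ncard, by rw [cn_prism_inr, ncard_inr_union], ?_⟩
      calc (closedNbhd G {v}).ncard ≤ (Set.univ : Set V).ncard :=
            Set.ncard_le_ncard (Set.subset_univ _) (Set.toFinite _)
        _ = n := by rw [Set.ncard_univ, Nat.card_eq_fintype_card, hn]
  rw [IsPDomSet] at hS
  have hcard2 : (Fintype.card (V ⊕ V) : ℝ) = 2 * n := by
    rw [Fintype.card_sum, hn]; push_cast; ring
  rw [hcard2, ht, div_le_div_iff_of_pos_right hpos] at hS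
  have h1 : (n : ℝ) + domNum G ≤ n + 1 := by
    calc (n : ℝ) + domNum G ≤ (t : ℝ) + 1 := by push_cast at hS; linarith
      _ ≤ (n : ℝ) + 1 := by exact_mod_cast Nat.add_le_add_right htn 1
  have hle : domNum G ≤ 1 := by exact_mod_cast le_of_add_le_add_left h1
  exact le_antisymm hle (domNum_ge_one G)

theorem stmt7 {V : Type*} [Fintype V] (G : SimpleGraph V) (n : ℕ)
    (hn : Fintype.card V = n)
    (π : Equiv.Perm V) :
    pDomNum (prism G π) (((n : ℝ) + domNum G) / (2 * n)) = 1 ↔ domNum G = 1 := by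
  constructor
  · intro h
    have hne : {k | ∃ S : Set (V ⊕ V),
        IsPDomSet (prism G π) (((n : ℝ) + domNum G) / (2 * n)) S ∧ S.ncard = k}.Nonempty := by
      by_contra hc
      rw [Set.not_nonempty_iff_eq_empty] at hc
      rw [pDomNum, hc, Nat.sInf_empty] at h
      exact one_ne_zero h.symm
    obtain ⟨S, hS, hcard⟩ := Nat.sInf_mem hne
    rw [← pDomNum, h, Set.ncard_eq_one] at hcard
    obtain ⟨x, rfl⟩ := hcard
    exact pdom_to_bound G n hn π x hS
  · intro h
    -- get a dominating singleton
    have hdne : {k | ∃ S : Set V, IsDomSet G S ∧ S.ncard = k}.Nonempty := by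
      by_contra hc
      rw [Set.not_nonempty_iff_eq_empty] at hc
      rw [domNum, hc, Nat.sInf_empty] at h
      exact one_ne_zero h.symm
    obtain ⟨D, hD, hDcard⟩ := Nat.sInf_mem hdne
    rw [← domNum, h, Set.ncard_eq_one] at hDcard
    obtain ⟨v, rfl⟩ := hDcard
    have hnV : Nonempty V := ⟨v⟩
    have hnpos : 0 < n := by rw [← hn]; exact Fintype.card_pos
    have hcnv : closedNbhd G {v} = Set.univ := by
      ext w; simp only [Set.mem_univ, iff_true]; exact hD w
    have hpos : (0 : ℝ) < 2 * n := by positivity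
    have hcard2 : (Fintype.card (V ⊕ V) : ℝ) = 2 * n := by
      rw [Fintype.card_sum, hn]; push_cast; ring
    have hmem : 1 ∈ {k | ∃ S : Set (V ⊕ V),
        IsPDomSet (prism G π) (((n : ℝ) + domNum G) / (2 * n)) S ∧ S.ncard = k} := by
      refine ⟨{Sum.inl v}, ?_, Set.ncard_singleton _⟩
      rw [IsPDomSet, hcard2, cn_prism_inl, ncard_inl_union, hcnv, Set.ncard_univ,
        Nat.card_eq_fintype_card, hn, h]
      push_cast
      exact le_refl _
    refine le_antisymm (Nat.sInf_le hmem) ?_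
    rw [Nat.one_le_iff_ne_zero]
    intro h0
    obtain ⟨S, hS, hcard⟩ := Nat.sInf_mem ⟨1, hmem⟩
    have hcard0 : S.ncard = 0 := by rw [hcard]; exact h0
    rw [Set.ncard_eq_zero (Set.toFinite _)] at hcard0
    subst hcard0
    rw [IsPDomSet, cn_empty, Set.ncard_empty] at hS
    have : (0:ℝ) < ((n : ℝ) + domNum G) / (2 * n) := by
      apply div_pos _ hpos
      have : (0:ℝ) < n := by exact_mod_cast hnpos
      positivity
    simp at hS
    linarith
end

section
/- Let G be any graph on n vertices with γ(G) = 2, and let π be any permutation of V(G). Then γ_{(n+γ(G))/(2n)}(πG) = 2; that is, the p-domination number of the prism with p = (n+2)/(2n) equals 2. -/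
open SimpleGraph

theorem stmt8 {V : Type*} [Fintype V] (G : SimpleGraph V) (n : ℕ)
    (hn : Fintype.card V = n)
    (hγ : domNum G = 2)
    (π : Equiv.Perm V) :
    pDomNum (prism G π) (((n : ℝ) + domNum G) / (2 * n)) = 2 := by
  classical
  -- unfold the domination number assumption
  have hne : {k | ∃ S : Set V, IsDomSet G S ∧ S.ncard = k}.Nonempty :=
    ⟨Fintype.card V, Set.univ, fun v => Or.inl (Set.mem_univ v), by simp [Set.ncard_univ]⟩
  have hmem := Nat.sInf_mem hne
  have hγ' : sInf {k | ∃ S : Set V, IsDomSet G S ∧ S.ncard = k} = 2 := hγ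
  rw [hγ'] at hmem
  obtain ⟨D, hD, hD2⟩ := hmem
  have hnot1 : ∀ a : V, ¬ IsDomSet G {a} := by
    intro a h
    have : domNum G ≤ 1 := Nat.sInf_le ⟨{a}, h, Set.ncard_singleton a⟩
    omega
  have hn2 : 2 ≤ n := by
    have : D.ncard ≤ (Set.univ : Set V).ncard :=
      Set.ncard_le_ncard (Set.subset_univ D) Set.finite_univ
    rw [Set.ncard_univ, Nat.card_eq_fintype_card, hn] at this
    omega
  have h2n : (0:ℝ) < 2 * (n:ℝ) := by positivity
  have hcardsum : (Fintype.card (V ⊕ V) : ℝ) = 2 * (n:ℝ) := by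
    rw [Fintype.card_sum, hn]; push_cast; ring
  -- singleton closed neighborhoods in G are not everything
  have hsingle : ∀ a : V, (closedNbhd G {a}).ncard < n := by
    intro a
    have hss : closedNbhd G {a} ⊂ Set.univ := by
      refine ⟨Set.subset_univ _, fun h => hnot1 a fun v => h (Set.mem_univ v)⟩
    have := Set.ncard_lt_ncard hss Set.finite_univ
    rwa [Set.ncard_univ, Nat.card_eq_fintype_card, hn] at this
  -- key bound: closed nbhd of any singleton in the prism has at most n elements
  have hprismsingle : ∀ x : V ⊕ V, (closedNbhd (prism G π) {x}).ncard ≤ n := by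
    rintro (a | a)
    · have hsub : closedNbhd (prism G π) {Sum.inl a} ⊆
          Sum.inl '' (closedNbhd G {a}) ∪ {Sum.inr (π a)} := by
        rintro (b | b) h
        · left
          refine ⟨b, ?_, rfl⟩
          rcases h with h | ⟨u, hu, hadj⟩
          · exact Or.inl (Sum.inl.inj (Set.mem_singleton_iff.mp h))
          · rw [Set.mem_singleton_iff] at hu; subst hu
            exact Or.inr ⟨a, rfl, hadj⟩
        · right
          rcases h with h | ⟨u, hu, hadj⟩
          · exact absurd h (by simp)
          · rw [Set.mem_singleton_iff] at hu; subst hu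
            have : π a = b := hadj
            simp [this]
      calc (closedNbhd (prism G π) {Sum.inl a}).ncard
          ≤ (Sum.inl '' (closedNbhd G {a}) ∪ {Sum.inr (π a)}).ncard :=
            Set.ncard_le_ncard hsub (Set.toFinite _)
        _ ≤ (Sum.inl '' (closedNbhd G {a}) : Set (V ⊕ V)).ncard + ({Sum.inr (π a)} : Set (V ⊕ V)).ncard :=
            Set.ncard_union_le _ _
        _ ≤ (n - 1) + 1 := by
            have h1 : (Sum.inl '' (closedNbhd G {a}) : Set (V ⊕ V)).ncard = (closedNbhd G {a}).ncard :=
              Set.ncard_image_of_injective _ Sum.inl_injective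
            have := hsingle a
            rw [h1, Set.ncard_singleton]
            omega
        _ ≤ n := by omega
    · have hsub : closedNbhd (prism G π) {Sum.inr a} ⊆
          Sum.inr '' (closedNbhd G {a}) ∪ {Sum.inl (π.symm a)} := by
        rintro (b | b) h
        · right
          rcases h with h | ⟨u, hu, hadj⟩
          · exact absurd h (by simp)
          · rw [Set.mem_singleton_iff] at hu; subst hu
            have : π b = a := hadj
            have : b = π.symm a := by
              apply_fun π.symm at this; simpa using this
            simp [this]
        · left
          refine ⟨b, ?_, rfl⟩
          rcases h with h | ⟨u, hu, hadj⟩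
          · exact Or.inl (Sum.inr.inj (Set.mem_singleton_iff.mp h))
          · rw [Set.mem_singleton_iff] at hu; subst hu
            exact Or.inr ⟨a, rfl, hadj⟩
      calc (closedNbhd (prism G π) {Sum.inr a}).ncard
          ≤ (Sum.inr '' (closedNbhd G {a}) ∪ {Sum.inl (π.symm a)}).ncard :=
            Set.ncard_le_ncard hsub (Set.toFinite _)
        _ ≤ (Sum.inr '' (closedNbhd G {a}) : Set (V ⊕ V)).ncard + ({Sum.inl (π.symm a)} : Set (V ⊕ V)).ncard :=
            Set.ncard_union_le _ _
        _ ≤ (n - 1) + 1 := by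
            have h1 : (Sum.inr '' (closedNbhd G {a}) : Set (V ⊕ V)).ncard = (closedNbhd G {a}).ncard :=
              Set.ncard_image_of_injective _ Sum.inr_injective
            have := hsingle a
            rw [h1, Set.ncard_singleton]
            omega
        _ ≤ n := by omega
  -- the witness set of size 2
  obtain ⟨u, v, huv, hDuv⟩ := Set.ncard_eq_two.mp hD2
  subst hDuv
  have h2mem : (2:ℕ) ∈ {k | ∃ S : Set (V ⊕ V),
      IsPDomSet (prism G π) (((n : ℝ) + domNum G) / (2 * n)) S ∧ S.ncard = k} := by
    refine ⟨{Sum.inl u, Sum.inl v}, ?_, Set.ncard_pair (by simpa using huv)⟩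
    have hsub : (Sum.inl '' Set.univ ∪ {Sum.inr (π u), Sum.inr (π v)} : Set (V ⊕ V)) ⊆
        closedNbhd (prism G π) {Sum.inl u, Sum.inl v} := by
      rintro (b | b) h
      · rcases hD b with hb | ⟨w, hw, hadj⟩
        · left
          simp only [Set.mem_insert_iff, Set.mem_singleton_iff] at hb ⊢
          rcases hb with rfl | rfl
          · exact Or.inl rfl
          · exact Or.inr rfl
        · simp only [Set.mem_insert_iff, Set.mem_singleton_iff] at hw
          rcases hw with rfl | rfl
          · exact Or.inr ⟨Sum.inl w, by simp, hadj⟩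
          · exact Or.inr ⟨Sum.inl w, by simp, hadj⟩
      · rcases h with ⟨c, _, hc⟩ | h
        · exact absurd hc (by simp)
        · rcases h with h | h
          · refine Or.inr ⟨Sum.inl u, by simp, ?_⟩
            have : b = π u := by simpa using h
            exact this.symm
          · refine Or.inr ⟨Sum.inl v, by simp, ?_⟩
            have : b = π v := by simpa using h
            exact this.symm
    have hcard : (Sum.inl '' Set.univ ∪ {Sum.inr (π u), Sum.inr (π v)} : Set (V ⊕ V)).ncard = n + 2 := by
      rw [Set.ncard_union_eq ?_ (Set.toFinite _) (Set.toFinite _)]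
      · rw [Set.ncard_image_of_injective _ Sum.inl_injective, Set.ncard_univ,
          Nat.card_eq_fintype_card, hn, Set.ncard_pair (by simp [huv])]
      · rw [Set.disjoint_left]
        rintro x ⟨c, _, rfl⟩ hx
        simp at hx
    have hge : n + 2 ≤ (closedNbhd (prism G π) {Sum.inl u, Sum.inl v}).ncard := by
      rw [← hcard]
      exact Set.ncard_le_ncard hsub (Set.toFinite _)
    unfold IsPDomSet
    rw [hcardsum, hγ]
    rw [div_le_div_iff_of_pos_right h2n]
    push_cast
    exact_mod_cast hge
  refine le_antisymm (Nat.sInf_le h2mem) (le_csInf ⟨2, h2mem⟩ ?_)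
  rintro k ⟨S, hS, rfl⟩
  by_contra hk
  push_neg at hk
  interval_cases h : S.ncard
  · have hSe : S = ∅ := (Set.ncard_eq_zero (Set.toFinite S)).mp h
    subst hSe
    have hempty : closedNbhd (prism G π) (∅ : Set (V ⊕ V)) = ∅ := by
      ext x; simp [closedNbhd]
    unfold IsPDomSet at hS
    rw [hempty, hγ] at hS
    simp at hS
    have : (0:ℝ) < ((n:ℝ) + 2) / (2 * n) := by positivity
        
    linarith
  · obtain ⟨x, hx⟩ := Set.ncard_eq_one.mp h
    subst hx
    unfold IsPDomSet at hS
    rw [hcardsum, hγ] at hS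
    rw [div_le_div_iff_of_pos_right h2n] at hS
    have hle := hprismsingle x
    have : ((closedNbhd (prism G π) {x}).ncard : ℝ) ≤ n := by exact_mod_cast hle
    push_cast at hS
    linarith
end

section
/- Let G be a graph on n vertices with γ(G) ≥ 3, let π be a permutation of V(G), let u_Δ be a vertex of G of maximum degree Δ(G), and let u'_Δ denote the copy of u_Δ in the second copy of G in the prism πG. Set i = |N_{πG}[u_Δ] ∩ N_{πG}[u'_Δ]| (so 0 ≤ i ≤ 2). If Δ(G) ≥ (n + γ(G) − 4 + i)/2, then γ_{(n+γ(G))/(2n)}(πG) = 2. -/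
open SimpleGraph

lemma closedNbhd_singleton {V : Type*} (G : SimpleGraph V) (a : V) :
    closedNbhd G {a} = insert a (G.neighborSet a) := by
  ext v; simp [closedNbhd, SimpleGraph.neighborSet, eq_comm]

lemma closedNbhd_pair {V : Type*} (G : SimpleGraph V) (a b : V) :
    closedNbhd G {a, b} = closedNbhd G {a} ∪ closedNbhd G {b} := by
  ext v; simp only [closedNbhd, Set.mem_setOf_eq, Set.mem_union, Set.mem_insert_iff,
    Set.mem_singleton_iff]
  constructor
  · rintro (h|⟨w, (rfl|rfl), hw⟩)
    · rcases h with h|h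
      · exact Or.inl (Or.inl h)
      · exact Or.inr (Or.inl h)
    · exact Or.inl (Or.inr ⟨w, rfl, hw⟩)
    · exact Or.inr (Or.inr ⟨w, rfl, hw⟩)
  · rintro ((h|⟨w, rfl, hw⟩)|(h|⟨w, rfl, hw⟩))
    · exact Or.inl (Or.inl h)
    · exact Or.inr ⟨w, Or.inl rfl, hw⟩
    · exact Or.inl (Or.inr h)
    · exact Or.inr ⟨w, Or.inr rfl, hw⟩

lemma prism_nbhd_inl {V : Type*} (G : SimpleGraph V) (π : Equiv.Perm V) (a : V) :
    (prism G π).neighborSet (Sum.inl a) = Sum.inl '' G.neighborSet a ∪ {Sum.inr (π a)} := by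
  ext (b|b) <;> simp [prism, SimpleGraph.neighborSet, eq_comm]

lemma prism_nbhd_inr {V : Type*} (G : SimpleGraph V) (π : Equiv.Perm V) (a : V) :
    (prism G π).neighborSet (Sum.inr a) = Sum.inr '' G.neighborSet a ∪ {Sum.inl (π.symm a)} := by
  ext (b|b) <;> simp [prism, SimpleGraph.neighborSet, Equiv.eq_symm_apply, eq_comm]

lemma ncard_closedNbhd_inl {V : Type*} [Fintype V] (G : SimpleGraph V) (π : Equiv.Perm V) (a : V) :
    (closedNbhd (prism G π) {Sum.inl a}).ncard = (G.neighborSet a).ncard + 2 := by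
  rw [closedNbhd_singleton, prism_nbhd_inl]
  rw [Set.ncard_insert_of_notMem (by simp [G.irrefl])]
  rw [Set.ncard_union_eq (by simp [Set.disjoint_left])]
  rw [Set.ncard_image_of_injective _ Sum.inl_injective, Set.ncard_singleton]

lemma ncard_closedNbhd_inr {V : Type*} [Fintype V] (G : SimpleGraph V) (π : Equiv.Perm V) (a : V) :
    (closedNbhd (prism G π) {Sum.inr a}).ncard = (G.neighborSet a).ncard + 2 := by
  rw [closedNbhd_singleton, prism_nbhd_inr]
  rw [Set.ncard_insert_of_notMem (by simp [G.irrefl])]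
  rw [Set.ncard_union_eq (by simp [Set.disjoint_left])]
  rw [Set.ncard_image_of_injective _ Sum.inr_injective, Set.ncard_singleton]

theorem stmt9 {V : Type*} [Fintype V] (G : SimpleGraph V) (n : ℕ)
    (hn : Fintype.card V = n)
    (hγ : 3 ≤ domNum G)
    (π : Equiv.Perm V)
    (u : V) (hu : ∀ w : V, (G.neighborSet w).ncard ≤ (G.neighborSet u).ncard)
    (i : ℕ)
    (hi : (closedNbhd (prism G π) {Sum.inl u} ∩
            closedNbhd (prism G π) {Sum.inr u}).ncard = i)
    (hΔ : ((n : ℝ) + domNum G - 4 + i) / 2 ≤ ((G.neighborSet u).ncard : ℝ)) :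
    pDomNum (prism G π) (((n : ℝ) + domNum G) / (2 * n)) = 2 := by
  classical
  set γ := domNum G with hγdef
  set Δ := (G.neighborSet u).ncard with hΔdef
  -- n is positive
  have hn0 : 0 < n := by
    rcases Nat.eq_zero_or_pos n with h0 | h
    · exfalso
      have hV : IsEmpty V := by
        rw [← Fintype.card_eq_zero_iff, hn, h0]
      have hd : IsDomSet G (∅ : Set V) := fun v => (hV.false v).elim
      have : γ ≤ 0 := Nat.sInf_le ⟨∅, hd, Set.ncard_empty V⟩
      omega
    · exact h
  have hcardsum : Fintype.card (V ⊕ V) = 2 * n := by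
    rw [Fintype.card_sum, hn]; ring
  -- max degree bound
  have hΔn : Δ + 1 ≤ n := by
    have h1 := Set.ncard_le_ncard (Set.subset_univ (insert u (G.neighborSet u)))
      (Set.toFinite _)
    rw [Set.ncard_univ, Nat.card_eq_fintype_card, hn,
      Set.ncard_insert_of_notMem (by simp [G.irrefl])] at h1
    omega
  have h2n : (0:ℝ) < 2 * n := by positivity
  -- the candidate set
  set A := closedNbhd (prism G π) {Sum.inl u} with hAdef
  set B := closedNbhd (prism G π) {Sum.inr u} with hBdef
  have hA : A.ncard = Δ + 2 := ncard_closedNbhd_inl G π u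
  have hB : B.ncard = Δ + 2 := ncard_closedNbhd_inr G π u
  have hunion : (A ∪ B).ncard + i = 2 * Δ + 4 := by
    have := Set.ncard_union_add_ncard_inter A B (Set.toFinite _) (Set.toFinite _)
    rw [hi, hA, hB] at this
    omega
  have h2mem : 2 ∈ {k | ∃ S : Set (V ⊕ V),
      IsPDomSet (prism G π) (((n : ℝ) + γ) / (2 * n)) S ∧ S.ncard = k} := by
    refine ⟨{Sum.inl u, Sum.inr u}, ?_, Set.ncard_pair (by simp)⟩
    unfold IsPDomSet
    rw [closedNbhd_pair, ← hAdef, ← hBdef, hcardsum]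
    have hcast : ((A ∪ B).ncard : ℝ) = 2 * Δ + 4 - i := by
      have h := congrArg (fun k : ℕ => (k : ℝ)) hunion
      push_cast at h
      linarith
    rw [hcast]
    push_cast
    rw [div_le_div_iff_of_pos_right h2n]
    linarith
  have hn1 : (1:ℝ) ≤ n := by exact_mod_cast hn0
  have hg3 : (3:ℝ) ≤ γ := by exact_mod_cast hγ
  have hΔn' : (Δ:ℝ) + 1 ≤ n := by exact_mod_cast hΔn
  have hbound : ∀ k ∈ {k | ∃ S : Set (V ⊕ V),
      IsPDomSet (prism G π) (((n : ℝ) + γ) / (2 * n)) S ∧ S.ncard = k}, 2 ≤ k := by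
    rintro k ⟨T, hT, rfl⟩
    by_contra hk
    push_neg at hk
    unfold IsPDomSet at hT
    rw [hcardsum] at hT
    push_cast at hT
    have hcases : T.ncard = 0 ∨ T.ncard = 1 := by omega
    rcases hcases with h0 | h1
    · rw [(Set.ncard_eq_zero (Set.toFinite T)).mp h0] at hT
      have he : closedNbhd (prism G π) (∅ : Set (V ⊕ V)) = ∅ := by
        ext v; simp [closedNbhd]
      rw [he, Set.ncard_empty] at hT
      push_cast at hT
      rw [div_le_div_iff_of_pos_right h2n] at hT
      linarith
    · obtain ⟨w, hw⟩ := Set.ncard_eq_one.mp h1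
      rw [hw] at hT
      rcases w with a | a
      · rw [ncard_closedNbhd_inl] at hT
        rw [div_le_div_iff_of_pos_right h2n] at hT
        have ha : ((G.neighborSet a).ncard : ℝ) ≤ Δ := by exact_mod_cast hu a
        push_cast at hT
        linarith
      · rw [ncard_closedNbhd_inr] at hT
        rw [div_le_div_iff_of_pos_right h2n] at hT
        have ha : ((G.neighborSet a).ncard : ℝ) ≤ Δ := by exact_mod_cast hu a
        push_cast at hT
        linarith
  exact le_antisymm (Nat.sInf_le h2mem) (le_csInf ⟨2, h2mem⟩ hbound)
end

section
/- Let G be any graph on n vertices, let p ∈ (0, 1], and let π be any permutation of V(G). Then γ_p(G) ≤ γ_p(πG); that is, the p-domination number of G is at most the p-domination number of its prism with respect to π. -/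
open SimpleGraph

lemma aux {V : Type*} [Fintype V] (G : SimpleGraph V) (p : ℝ) (hp0 : 0 < p)
    (π : Equiv.Perm V) (S : Set (V ⊕ V)) (hS : IsPDomSet (prism G π) p S) :
    ∃ T : Set V, IsPDomSet G p T ∧ T.ncard ≤ S.ncard := by
  by_cases hV : Nonempty V
  · have hn : 0 < (Fintype.card V : ℝ) := by positivity
    set C := closedNbhd (prism G π) S with hC
    set A := Sum.inl ⁻¹' C with hA
    set B := Sum.inr ⁻¹' C with hB
    have hsplit : C = Sum.inl '' A ∪ Sum.inr '' B := by
      ext (v|v) <;> simp [hA, hB]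
    have hcard : C.ncard = A.ncard + B.ncard := by
      rw [hsplit, Set.ncard_union_eq (by
          simp [Set.disjoint_left]) ((A.toFinite.image _)) ((B.toFinite.image _)),
        Set.ncard_image_of_injective _ Sum.inl_injective,
        Set.ncard_image_of_injective _ Sum.inr_injective]
    have h2n : p * (2 * Fintype.card V) ≤ (C.ncard : ℝ) := by
      have h := hS
      rw [IsPDomSet, le_div_iff₀ (by simp [Fintype.card_sum]; positivity)] at h
      push_cast [Fintype.card_sum] at h
      linarith
    have key : p * Fintype.card V ≤ (A.ncard : ℝ) ∨ p * Fintype.card V ≤ (B.ncard : ℝ) := by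
      by_contra h
      push_neg at h
      have := hcard
      have h1 := h.1; have h2 := h.2
      have : (C.ncard : ℝ) = A.ncard + B.ncard := by exact_mod_cast hcard
      linarith
    rcases key with hk | hk
    · refine ⟨Sum.elim id (⇑π.symm) '' S, ?_, Set.ncard_image_le S.toFinite⟩
      have hsub : A ⊆ closedNbhd G (Sum.elim id (⇑π.symm) '' S) := by
        rintro v hv
        rcases hv with hv | ⟨(u|u), hu, hadj⟩
        · exact Or.inl ⟨Sum.inl v, hv, rfl⟩
        · exact Or.inr ⟨u, ⟨Sum.inl u, hu, rfl⟩, hadj⟩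
        · left
          refine ⟨Sum.inr u, hu, ?_⟩
          simp only [Sum.elim_inr]
          have : π v = u := hadj
          simp [← this]
      rw [IsPDomSet, le_div_iff₀ hn]
      calc p * Fintype.card V ≤ (A.ncard : ℝ) := hk
        _ ≤ _ := by exact_mod_cast Set.ncard_le_ncard hsub (Set.toFinite _)
    · refine ⟨Sum.elim (⇑π) id '' S, ?_, Set.ncard_image_le S.toFinite⟩
      have hsub : B ⊆ closedNbhd G (Sum.elim (⇑π) id '' S) := by
        rintro v hv
        rcases hv with hv | ⟨(u|u), hu, hadj⟩
        · exact Or.inl ⟨Sum.inr v, hv, rfl⟩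
        · left
          refine ⟨Sum.inl u, hu, ?_⟩
          simpa using (show π u = v from hadj)
        · exact Or.inr ⟨u, ⟨Sum.inr u, hu, rfl⟩, hadj⟩
      rw [IsPDomSet, le_div_iff₀ hn]
      calc p * Fintype.card V ≤ (B.ncard : ℝ) := hk
        _ ≤ _ := by exact_mod_cast Set.ncard_le_ncard hsub (Set.toFinite _)
  · exfalso
    have : IsEmpty V := not_nonempty_iff.mp hV
    have h0 : (closedNbhd (prism G π) S).ncard = 0 := by
      have : closedNbhd (prism G π) S = ∅ := Set.eq_empty_of_isEmpty _
      simp [this]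
    rw [IsPDomSet, h0] at hS
    simp at hS
    linarith

theorem stmt11 {V : Type*} [Fintype V] (G : SimpleGraph V) (n : ℕ)
    (hn : Fintype.card V = n)
    (p : ℝ) (hp0 : 0 < p) (hp1 : p ≤ 1)
    (π : Equiv.Perm V) :
    pDomNum G p ≤ pDomNum (prism G π) p := by
  by_cases hV : Nonempty V
  · have hne : {k | ∃ S : Set (V ⊕ V), IsPDomSet (prism G π) p S ∧ S.ncard = k}.Nonempty := by
      refine ⟨(Set.univ : Set (V ⊕ V)).ncard, Set.univ, ?_, rfl⟩
      have hcn : closedNbhd (prism G π) (Set.univ : Set (V ⊕ V)) = Set.univ := by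
        ext v; simpa [closedNbhd] using Or.inl trivial
      rw [IsPDomSet, hcn, Set.ncard_univ, Nat.card_eq_fintype_card, div_self]
      · exact hp1
      · have : 0 < Fintype.card (V ⊕ V) := by simp [Fintype.card_sum]; exact Fintype.card_pos
        positivity
    obtain ⟨S, hS, hSk⟩ := Nat.sInf_mem hne
    obtain ⟨T, hT, hTS⟩ := aux G p hp0 π S hS
    calc pDomNum G p ≤ T.ncard := Nat.sInf_le ⟨T, hT, rfl⟩
      _ ≤ S.ncard := hTS
      _ = pDomNum (prism G π) p := hSk
  · have : IsEmpty V := not_nonempty_iff.mp hV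
    have he : {k | ∃ S : Set V, IsPDomSet G p S ∧ S.ncard = k} = ∅ := by
      ext k
      simp only [Set.mem_setOf_eq, Set.mem_empty_iff_false, iff_false, not_exists]
      rintro S ⟨hS, -⟩
      rw [IsPDomSet] at hS
      simp [Set.eq_empty_of_isEmpty S, Set.eq_empty_of_isEmpty (closedNbhd G S)] at hS
      · linarith
    rw [pDomNum, he, Nat.sInf_empty]
    exact Nat.zero_le _
end
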